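/- Let w ≥ 2 be an integer, let α > 0 be a real, and let X be a finite multi-set of integers from [1, w]. If X has no α-almost divisor, then there exists a sub-multi-set R ⊆ X such that |R| ≤ 4α·log w and, for every integer d with 1 < d ≤ α, at least d elements of R are not divisible by d (i.e., |R \ R(d)| ≥ d). -/

import Mathlib

private lemma nq_mono (q : ℕ) {R S : Multiset ℕ} (h : R ≤ S) :
    (R.filter fun x => ¬ q ∣ x).card ≤ (S.filter fun x => ¬ q ∣ x).card :=
  Multiset.card_le_card (Multiset.filter_le_filter _ h)

private lemma cons_le_of_mem_sub {X R : Multiset ℕ} {y : ℕ} (hR : R ≤ X)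
    (hy : y ∈ X - R) : y ::ₘ R ≤ X := by
  rw [Multiset.le_iff_count]
  intro a
  have h1 : 0 < Multiset.count y (X - R) := Multiset.count_pos.2 hy
  rw [Multiset.count_sub] at h1
  rw [Multiset.count_cons]
  by_cases hay : a = y
  · subst hay; simp; omega
  · simp [hay]
    exact Multiset.le_iff_count.1 hR a

/-- Inner lemma: for each `q` in `B` we can add one element not divisible by `q`
(when needed), adding at most `B.card` elements total. -/
private lemma lemA (X : Multiset ℕ) (s : ℕ) :
    ∀ (B : Finset ℕ), (∀ q ∈ B, s ≤ (X.filter fun x => ¬ q ∣ x).card) →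
    ∀ R : Multiset ℕ, R ≤ X →
    ∃ R', R ≤ R' ∧ R' ≤ X ∧ Multiset.card R' ≤ Multiset.card R + B.card ∧
      ∀ q ∈ B, min s ((R.filter fun x => ¬ q ∣ x).card + 1)
        ≤ (R'.filter fun x => ¬ q ∣ x).card := by
  intro B
  induction B using Finset.induction_on with
  | empty => intro _ R hR; exact ⟨R, le_refl R, hR, by simp, by simp⟩
  | @insert a B ha IH =>
    intro hB R hRX
    obtain ⟨R₁, hRR₁, hR₁X, hcard₁, hq₁⟩ :=
      IH (fun q hq => hB q (Finset.mem_insert_of_mem hq)) R hRX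
    rw [Finset.card_insert_of_notMem ha]
    by_cases hs : s ≤ (R₁.filter fun x => ¬ a ∣ x).card
    · refine ⟨R₁, hRR₁, hR₁X, by omega, ?_⟩
      intro q hq
      rcases Finset.mem_insert.1 hq with rfl | hq
      · exact le_trans (min_le_left _ _) hs
      · exact hq₁ q hq
    · have hsX : s ≤ (X.filter fun x => ¬ a ∣ x).card := hB a (Finset.mem_insert_self a B)
      have hfle : (R₁.filter fun x => ¬ a ∣ x) ≤ (X.filter fun x => ¬ a ∣ x) :=
        Multiset.filter_le_filter _ hR₁X
      have hpos : ((X - R₁).filter fun x => ¬ a ∣ x) ≠ 0 := by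
        rw [Multiset.filter_sub]
        intro h0
        have := Multiset.card_sub hfle
        rw [h0] at this
        simp at this
        omega
      obtain ⟨y, hy⟩ := Multiset.exists_mem_of_ne_zero hpos
      rw [Multiset.mem_filter] at hy
      refine ⟨y ::ₘ R₁, le_trans hRR₁ (Multiset.le_cons_self _ _),
        cons_le_of_mem_sub hR₁X hy.1, by simp; omega, ?_⟩
      intro q hq
      rcases Finset.mem_insert.1 hq with rfl | hq
      · have hfc : Multiset.filter (fun x => ¬ q ∣ x) (y ::ₘ R₁)
            = y ::ₘ Multiset.filter (fun x => ¬ q ∣ x) R₁ :=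
          Multiset.filter_cons_of_pos _ hy.2
        rw [hfc]
        have := nq_mono q hRR₁
        simp only [Multiset.card_cons]
        have := min_le_right s ((R.filter fun x => ¬ q ∣ x).card + 1)
        omega
      · exact le_trans (hq₁ q hq) (nq_mono q (Multiset.le_cons_self _ _))

/-- Outer lemma: `t` rounds, each costing at most `1 + L` elements. -/
private lemma lemB (X : Multiset ℕ) (B : Finset ℕ) (L T : ℕ)
    (hL : ∀ x ∈ X, (B.filter (fun q => q ∣ x)).card ≤ L)
    (hT : ∀ q ∈ B, T < (X.filter fun x => ¬ q ∣ x).card) :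
    ∀ t ≤ T, ∃ R, R ≤ X ∧ Multiset.card R ≤ t * (1 + L) ∧
      ∀ q ∈ B, t ≤ (R.filter fun x => ¬ q ∣ x).card := by
  intro t
  induction t with
  | zero => intro _; exact ⟨0, Multiset.zero_le X, by simp, by simp⟩
  | succ t IH =>
    intro ht
    obtain ⟨R, hRX, hcard, hq⟩ := IH (by omega)
    by_cases hXR : X - R = 0
    · have hXR' : X ≤ R := by rwa [tsub_eq_zero_iff_le] at hXR
      have hRe : R = X := le_antisymm hRX hXR'
      refine ⟨R, hRX, ?_, ?_⟩
      · calc Multiset.card R ≤ t * (1 + L) := hcard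
          _ ≤ (t + 1) * (1 + L) := Nat.mul_le_mul_right _ (by omega)
      · intro q hqB
        have := hT q hqB
        rw [hRe]
        omega
    · obtain ⟨x, hx⟩ := Multiset.exists_mem_of_ne_zero hXR
      have hxX : x ∈ X := Multiset.mem_of_le tsub_le_self hx
      have hR₁X : x ::ₘ R ≤ X := cons_le_of_mem_sub hRX hx
      obtain ⟨R₂, hR₁R₂, hR₂X, hcard₂, hq₂⟩ :=
        lemA X (t + 1) (B.filter (fun q => q ∣ x))
          (fun q hqm => by
            have := hT q (Finset.mem_of_mem_filter q hqm)
            omega)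
          (x ::ₘ R) hR₁X
      refine ⟨R₂, hR₂X, ?_, ?_⟩
      · have hB' := hL x hxX
        simp only [Multiset.card_cons] at hcard₂
        calc Multiset.card R₂ ≤ Multiset.card R + 1 + (B.filter (fun q => q ∣ x)).card :=
              hcard₂
          _ ≤ t * (1 + L) + 1 + L := by omega
          _ = (t + 1) * (1 + L) := by ring
      · intro q hqB
        by_cases hdvd : q ∣ x
        · have hmem : q ∈ B.filter (fun q => q ∣ x) := Finset.mem_filter.2 ⟨hqB, hdvd⟩
          have h1 := hq₂ q hmem
          have h2 : t ≤ ((x ::ₘ R).filter fun z => ¬ q ∣ z).card :=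
            le_trans (hq q hqB) (nq_mono q (Multiset.le_cons_self _ _))
          have h3 := min_le_left (t + 1) (((x ::ₘ R).filter fun z => ¬ q ∣ z).card + 1)
          have h4 : min (t + 1) (((x ::ₘ R).filter fun z => ¬ q ∣ z).card + 1) = t + 1 :=
            min_eq_left (by omega)
          omega
        · have h1 : ((x ::ₘ R).filter fun z => ¬ q ∣ z) = x ::ₘ (R.filter fun z => ¬ q ∣ z) :=
            Multiset.filter_cons_of_pos _ hdvd
          have h2 := nq_mono q hR₁R₂
          rw [h1] at h2
          simp only [Multiset.card_cons] at h2
          have := hq q hqB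
          omega

/-- Let `w ≥ 2`, `α > 0`, and let `X` be a multiset of integers from
`[1, w]`. If `X` has no `α`-almost divisor (i.e., for every integer `d > 1`, more than
`α` elements of `X` are not divisible by `d`), then there is a sub-multiset `R ⊆ X` with
`|R| ≤ 4α log w` such that for every integer `d` with `1 < d ≤ α`, at least `d` elements
of `R` are not divisible by `d`. -/
theorem stmt11 (w : ℕ) (hw : 2 ≤ w) (α : ℝ) (hα : 0 < α) (X : Multiset ℕ)
    (hX : ∀ x ∈ X, x ∈ Finset.Icc 1 w)
    (hnoad : ∀ d : ℕ, 1 < d → α < ((X.filter fun x => ¬ d ∣ x).card : ℝ)) :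
    ∃ R ≤ X, (Multiset.card R : ℝ) ≤ 4 * α * Real.logb 2 w ∧
      ∀ d : ℕ, 1 < d → (d : ℝ) ≤ α →
        d ≤ (R.filter fun x => ¬ d ∣ x).card := by
  classical
  set T : ℕ := ⌊α⌋₊ with hTdef
  set L : ℕ := Nat.log 2 w with hLdef
  set B : Finset ℕ := (Finset.Icc 2 T).filter Nat.Prime with hBdef
  have hTα : (T : ℝ) ≤ α := Nat.floor_le hα.le
  -- each element of X has at most L prime divisors in B
  have hL : ∀ x ∈ X, (B.filter (fun q => q ∣ x)).card ≤ L := by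
    intro x hxX
    have hx1 : x ∈ Finset.Icc 1 w := hX x hxX
    rw [Finset.mem_Icc] at hx1
    have hsub : B.filter (fun q => q ∣ x) ⊆ x.primeFactors := by
      intro q hq
      rw [Finset.mem_filter] at hq
      rw [hBdef, Finset.mem_filter] at hq
      exact Nat.mem_primeFactors.2 ⟨hq.1.2, hq.2, by omega⟩
    have hcards : (B.filter (fun q => q ∣ x)).card ≤ x.primeFactors.card :=
      Finset.card_le_card hsub
    have hpow : 2 ^ x.primeFactors.card ≤ x := by
      calc 2 ^ x.primeFactors.card ≤ ∏ p ∈ x.primeFactors, p :=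
            Finset.pow_card_le_prod _ _ _ (fun p hp => (Nat.prime_of_mem_primeFactors hp).two_le)
        _ ≤ x := Nat.le_of_dvd (by omega) (Nat.prod_primeFactors_dvd x)
    have hlogx : x.primeFactors.card ≤ Nat.log 2 x :=
      (Nat.le_log_iff_pow_le (by norm_num) (by omega)).2 hpow
    have : Nat.log 2 x ≤ L := Nat.log_mono_right hx1.2
    omega
  have hT : ∀ q ∈ B, T < (X.filter fun x => ¬ q ∣ x).card := by
    intro q hq
    rw [hBdef, Finset.mem_filter, Finset.mem_Icc] at hq
    have h1 : α < ((X.filter fun x => ¬ q ∣ x).card : ℝ) := hnoad q (by omega)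
    have : (T : ℝ) < ((X.filter fun x => ¬ q ∣ x).card : ℝ) := lt_of_le_of_lt hTα h1
    exact_mod_cast this
  obtain ⟨R, hRX, hcard, hq⟩ := lemB X B L T hL hT T (le_refl T)
  have hlogb1 : (1 : ℝ) ≤ Real.logb 2 w := by
    have := Real.logb_le_logb_of_le (b := 2) (by norm_num) (by norm_num)
      (show (2 : ℝ) ≤ (w : ℝ) by exact_mod_cast hw)
    rwa [Real.logb_self_eq_one (by norm_num)] at this
  have hLlogb : (L : ℝ) ≤ Real.logb 2 w := by
    have := Real.natLog_le_logb w 2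
    exact_mod_cast this
  refine ⟨R, hRX, ?_, ?_⟩
  · have h1 : (Multiset.card R : ℝ) ≤ (T : ℝ) * (1 + (L : ℝ)) := by
      have : (Multiset.card R : ℝ) ≤ ((T * (1 + L) : ℕ) : ℝ) := by exact_mod_cast hcard
      rw [Nat.cast_mul] at this
      push_cast at this
      linarith
    have h2 : (T : ℝ) * (1 + (L : ℝ)) ≤ α * (2 * Real.logb 2 w) := by
      have hT0 : (0 : ℝ) ≤ (T : ℝ) := Nat.cast_nonneg T
      have h1L : (1 : ℝ) + (L : ℝ) ≤ 2 * Real.logb 2 w := by linarith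
      nlinarith
    nlinarith [Real.logb_nonneg (show (1:ℝ) < 2 by norm_num)
      (show (1:ℝ) ≤ (w : ℝ) by exact_mod_cast (by omega : 1 ≤ w)), hα.le]
  · intro d hd hdα
    have hdT : d ≤ T := Nat.le_floor hdα
    set p : ℕ := d.minFac with hpdef
    have hp : p.Prime := Nat.minFac_prime (by omega)
    have hpd : p ∣ d := Nat.minFac_dvd d
    have hpT : p ≤ T := le_trans (Nat.minFac_le (by omega)) hdT
    have hpB : p ∈ B := by
      rw [hBdef, Finset.mem_filter, Finset.mem_Icc]
      exact ⟨⟨hp.two_le, hpT⟩, hp⟩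
    have h1 : T ≤ (R.filter fun x => ¬ p ∣ x).card := hq p hpB
    have h2 : (R.filter fun x => ¬ p ∣ x) ≤ (R.filter fun x => ¬ d ∣ x) :=
      Multiset.monotone_filter_right R (fun b hb hdb => hb (dvd_trans hpd hdb))
    have h3 := Multiset.card_le_card h2
    omega
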